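/- Let R_φ be the rotation by angle φ about the e₃-axis in ℝ³ and let Q̃ be a symmetric traceless 3×3 matrix. Then |∂_φ (R_φ Q̃ R_φᵀ)|² = 8 Q̃₁₂² + 2 Q̃₁₃² + 2 Q̃₂₃² + 2(Q̃₁₁ − Q̃₂₂)², and this quantity is independent of φ. -/

import Mathlib

open Matrix

/-- Rotation by angle `φ` about the `e₃`-axis in `ℝ³`. -/
noncomputable def Rrot (φ : ℝ) : Matrix (Fin 3) (Fin 3) ℝ :=
  !![Real.cos φ, -Real.sin φ, 0; Real.sin φ, Real.cos φ, 0; 0, 0, 1]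

/-- Derivative of `Rrot`. -/
noncomputable def Rrot' (φ : ℝ) : Matrix (Fin 3) (Fin 3) ℝ :=
  !![-Real.sin φ, -Real.cos φ, 0; Real.cos φ, -Real.sin φ, 0; 0, 0, 0]

lemma hasDerivAt_Rrot (i k : Fin 3) (φ : ℝ) :
    HasDerivAt (fun ψ => Rrot ψ i k) (Rrot' φ i k) φ := by
  fin_cases i <;> fin_cases k <;>
    simp [Rrot, Rrot'] <;>
    first
      | exact Real.hasDerivAt_cos φ
      | exact (Real.hasDerivAt_sin φ).neg
      | exact Real.hasDerivAt_sin φ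
      | exact hasDerivAt_const φ _

lemma hasDerivAt_entry (Qt : Matrix (Fin 3) (Fin 3) ℝ) (i j : Fin 3) (φ : ℝ) :
    HasDerivAt (fun ψ => (Rrot ψ * Qt * (Rrot ψ)ᵀ) i j)
      ((Rrot' φ * Qt * (Rrot φ)ᵀ + Rrot φ * Qt * (Rrot' φ)ᵀ) i j) φ := by
  have key : ∀ ψ, (Rrot ψ * Qt * (Rrot ψ)ᵀ) i j
      = ∑ l, (∑ k, Rrot ψ i k * Qt k l) * Rrot ψ j l := by
    intro ψ; simp [Matrix.mul_apply, Matrix.transpose_apply]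
  simp only [key]
  have hD : HasDerivAt (fun ψ => ∑ l, (∑ k, Rrot ψ i k * Qt k l) * Rrot ψ j l)
      (∑ l, ((∑ k, Rrot' φ i k * Qt k l) * Rrot φ j l
        + (∑ k, Rrot φ i k * Qt k l) * Rrot' φ j l)) φ := by
    refine HasDerivAt.fun_sum fun l _ => ?_
    exact (HasDerivAt.fun_sum fun k _ => (hasDerivAt_Rrot i k φ).mul_const (Qt k l)).mul
      (hasDerivAt_Rrot j l φ)
  convert hD using 1
  simp [Matrix.add_apply, Matrix.mul_apply, Matrix.transpose_apply, Finset.sum_add_distrib]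

theorem stmt6 (Qt : Matrix (Fin 3) (Fin 3) ℝ) (hsym : Qt.IsSymm) (htr : Qt.trace = 0)
    (φ : ℝ) :
    (∑ i, ∑ j, (deriv (fun ψ => (Rrot ψ * Qt * (Rrot ψ)ᵀ) i j) φ)^2)
      = 8 * Qt 0 1 ^ 2 + 2 * Qt 0 2 ^ 2 + 2 * Qt 1 2 ^ 2 + 2 * (Qt 0 0 - Qt 1 1)^2 := by
  have hd : ∀ i j, deriv (fun ψ => (Rrot ψ * Qt * (Rrot ψ)ᵀ) i j) φ
      = (Rrot' φ * Qt * (Rrot φ)ᵀ + Rrot φ * Qt * (Rrot' φ)ᵀ) i j :=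
    fun i j => (hasDerivAt_entry Qt i j φ).deriv
  simp only [hd]
  have h10 : Qt 1 0 = Qt 0 1 := hsym.apply 0 1
  have h20 : Qt 2 0 = Qt 0 2 := hsym.apply 0 2
  have h21 : Qt 2 1 = Qt 1 2 := hsym.apply 1 2
  simp only [Matrix.add_apply, Matrix.mul_apply, Matrix.transpose_apply, Fin.sum_univ_three]
  simp [Rrot, Rrot', Matrix.vecHead, Matrix.vecTail, h10, h20, h21]
  set c := Real.cos φ
  set s := Real.sin φ
  have hsc : s ^ 2 + c ^ 2 = 1 := Real.sin_sq_add_cos_sq φ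
  linear_combination (2 * Qt 1 2 ^ 2 + 2 * Qt 0 2 ^ 2
    + (2 * Qt 0 0 ^ 2 + 8 * Qt 0 1 ^ 2 - 4 * Qt 0 0 * Qt 1 1 + 2 * Qt 1 1 ^ 2)
      * (1 + s ^ 2 + c ^ 2)) * hsc
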